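/- For an integer t ≥ 3, consider the proper 3-colorings of the cycle C_t (maps c : Z_t → {1,2,3} with c(x) ≠ c(x+1) for all x ∈ Z_t), and the equivalence relation on them generated by: c ~ c' whenever c and c' differ at exactly one vertex. Then the number c_t of equivalence classes (equal to the number of connected components of Hom(C_t, K_3)) is: c_t = ⌊(t+1)/3⌋ if 3 does not divide t, and c_t = t/3 + 5 if 3 divides t. -/

import Mathlib

set_option linter.unusedSectionVars false
section
variable (t : ℕ) [NeZero t] [Fact (1 < t)]
def Col := {c : ZMod t → Fin 3 // ∀ x : ZMod t, c x ≠ c (x + 1)}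
def R (c c' : Col t) : Prop := ∃! v : ZMod t, c.1 v ≠ c'.1 v
def toZ3 (a : Fin 3) : ZMod 3 := a
def toFin (a : ZMod 3) : Fin 3 := a
variable {t}
def dc (c : Col t) (x : ZMod t) : ZMod 3 := toZ3 (c.1 (x+1)) - toZ3 (c.1 x)
lemma dc_ne_zero (c : Col t) (x : ZMod t) : dc c x ≠ 0 := sub_ne_zero.mpr (fun h => c.2 x (h.symm))
lemma one_ne_zero_t : (1 : ZMod t) ≠ 0 := by
  intro h; have h1 := congrArg ZMod.val h
  rw [ZMod.val_one, ZMod.val_zero] at h1; exact one_ne_zero h1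
lemma sub_one_ne (v : ZMod t) : v - 1 ≠ v := by intro h; exact one_ne_zero_t (by linear_combination -h)
lemma add_one_ne (v : ZMod t) : v + 1 ≠ v := by intro h; exact one_ne_zero_t (by linear_combination h)
lemma sub_one_add_one (v : ZMod t) : v - 1 + 1 = v := by ring
lemma z1 : ∀ a b : ZMod 3, a ≠ b → ((-a-b ≠ a) ∧ (-a-b ≠ b)) := by decide
lemma z2 : ∀ a b c d : ZMod 3, a ≠ 0 → b ≠ 0 → c ≠ 0 → d ≠ 0 → a ≠ c → a + b = c + d →
    ((c = b ∧ d = a) ∧ a ≠ b) := by decide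
lemma z7 : ∀ a b : ZMod 3, a ≠ 0 → b ≠ 0 → a ≠ b → a + b = 0 := by decide
lemma rel_structure {c c' : Col t} {v : ZMod t} (hv : c.1 v ≠ c'.1 v)
    (hoff : ∀ x, x ≠ v → c.1 x = c'.1 x) :
    dc c' (v-1) = dc c v ∧ dc c' v = dc c (v-1) ∧ dc c (v-1) ≠ dc c v ∧
      (∀ x, x ≠ v - 1 → x ≠ v → dc c x = dc c' x) := by
  have h1 : v - 1 + 1 = v := sub_one_add_one v
  have e1 : c.1 (v-1) = c'.1 (v-1) := hoff _ (sub_one_ne v)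
  have e2 : c.1 (v+1) = c'.1 (v+1) := hoff _ (add_one_ne v)
  have haa' : dc c (v-1) ≠ dc c' (v-1) := by
    unfold dc; rw [h1, e1]; intro h; exact hv (sub_left_inj.mp h)
  have hsum : dc c (v-1) + dc c v = dc c' (v-1) + dc c' v := by
    unfold dc; rw [h1, ← e1, ← e2]; ring
  obtain ⟨⟨hab, hba⟩, hneq⟩ := z2 _ _ _ _ (dc_ne_zero c _) (dc_ne_zero c _)
    (dc_ne_zero c' _) (dc_ne_zero c' _) haa' hsum
  refine ⟨hab, hba, hneq, fun x hx1 hxv => ?_⟩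
  unfold dc
  rw [hoff x hxv, hoff (x+1) (fun h => hx1 (eq_sub_of_add_eq h))]

-- the basic move
lemma move' (c : Col t) (v : ZMod t) (hne : dc c (v-1) ≠ dc c v) :
    ∃ c' : Col t, Quot.mk (R t) c = Quot.mk (R t) c' ∧ dc c' (v-1) = dc c v ∧
      dc c' v = dc c (v-1) ∧ (∀ x, x ≠ v - 1 → x ≠ v → dc c' x = dc c x) ∧
      (∀ x, x ≠ v → c'.1 x = c.1 x) ∧ toZ3 (c'.1 v) = -toZ3 (c.1 v) - toZ3 (c.1 (v+1)) := by
  classical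
  have h1 : v - 1 + 1 = v := sub_one_add_one v
  have hsum : dc c (v-1) + dc c v = 0 :=
    z7 _ _ (dc_ne_zero c _) (dc_ne_zero c _) hne
  have hvm : toZ3 (c.1 (v-1)) = toZ3 (c.1 (v+1)) := by
    have h2 : (toZ3 (c.1 v) - toZ3 (c.1 (v-1))) + (toZ3 (c.1 (v+1)) - toZ3 (c.1 v)) = 0 := by
      have h3 := hsum; unfold dc at h3; rw [h1] at h3; linear_combination h3
    linear_combination -h2
  set nw : ZMod 3 := -toZ3 (c.1 v) - toZ3 (c.1 (v+1)) with hnwdef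
  have hne2 : toZ3 (c.1 v) ≠ toZ3 (c.1 (v+1)) := c.2 v
  have hnw := z1 _ _ hne2
  set f : ZMod t → Fin 3 := Function.update c.1 v (toFin nw) with hfdef
  have hfv : f v = toFin nw := Function.update_self v (toFin nw) c.1
  have hfoff : ∀ x, x ≠ v → f x = c.1 x := fun x hx => Function.update_of_ne hx _ _
  have hprop : ∀ x : ZMod t, f x ≠ f (x+1) := by
    intro x
    by_cases hxv : x = v
    · subst hxv
      rw [hfv, hfoff _ (add_one_ne x)]
      exact hnw.2
    · by_cases hxv1 : x = v - 1
      · subst hxv1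
        rw [h1, hfv, hfoff _ (sub_one_ne v)]
        intro h
        exact hnw.2 (hvm ▸ (congrArg toZ3 h)).symm
      · rw [hfoff _ hxv, hfoff _ (fun h => hxv1 (eq_sub_of_add_eq h))]
        exact c.2 x
  refine ⟨⟨f, hprop⟩, ?_, ?_⟩
  · apply Quot.sound
    refine ⟨v, ?_, ?_⟩
    · show c.1 v ≠ f v
      rw [hfv]
      intro h
      exact hnw.1 (congrArg toZ3 h).symm
    · intro y hy
      by_contra hyv
      exact hy (hfoff y hyv).symm
  · have hst := rel_structure (c' := ⟨f, hprop⟩) (v := v)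
      (by show c.1 v ≠ f v; rw [hfv]; intro h; exact hnw.1 (congrArg toZ3 h).symm)
      (fun x hx => (hfoff x hx).symm)
    exact ⟨hst.1, hst.2.1, fun x h1 h2 => (hst.2.2.2 x h1 h2).symm, hfoff,
      by show toZ3 (f v) = nw; rw [hfv]; rfl⟩
lemma z3 : ∀ a : ZMod 3, ((a.val : ℕ) : ZMod 3) = a := by decide
lemma z4 : ∀ a b : ZMod 3, a.val = b.val → a = b := by decide
lemma z6 : ∀ a : ZMod 3, a ≠ 0 → 2 ≤ a.val → a = 2 := by decide
lemma z8 : ∀ a : ZMod 3, -a - (a+1) = a - 1 := by decide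
lemma z10 : ∀ a b : ZMod 3, a ≠ 0 → b ≠ 0 → ((a = 2) ↔ (b = 2)) → a = b := by decide
lemma z12 : ∀ a : ZMod 3, a ≠ 0 → a ≠ 2 → a = 1 := by decide
lemma z13 : ∀ a : ZMod 3, a.val = 1 → a = 1 := by decide
lemma z14 : ∀ a : ZMod 3, a.val = 2 → a = 2 := by decide
lemma z5 : ∀ a : ZMod 3, a ≠ 0 → (a.val = if a = 2 then 2 else 1) := by decide
lemma zval1 : (1 : ZMod 3).val = 1 := by decide
lemma zval2 : (2 : ZMod 3).val = 2 := by decide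
lemma zvlt : ∀ a : ZMod 3, a.val < 3 := by decide
lemma zvpos : ∀ a : ZMod 3, a ≠ 0 → 1 ≤ a.val := by decide
lemma ztwo_ne_one : (2 : ZMod 3) ≠ 1 := by decide

def S (c : Col t) : ℕ := ∑ x : ZMod t, (dc c x).val

def W (c : Col t) : ℕ := ∑ x : ZMod t, x.val * (dc c x).val

def Frozen (c : Col t) : Prop := ∀ x : ZMod t, dc c x = dc c 0

def Srt (c : Col t) : Prop := ∀ x : ZMod t, x.val + 1 < t → (dc c x).val ≤ (dc c (x+1)).val

lemma sum_pair_split (f : ZMod t → ℕ) (u w : ZMod t) (h : u ≠ w) :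
    ∑ x : ZMod t, f x = f u + f w + ∑ x ∈ Finset.univ \ {u, w}, f x := by
  rw [← Finset.sum_sdiff (Finset.subset_univ {u, w}), Finset.sum_pair h]
  ring

lemma rel_facts {c c' : Col t} (h : R t c c') :
    ∃ v : ZMod t, dc c' (v-1) = dc c v ∧ dc c' v = dc c (v-1) ∧ dc c (v-1) ≠ dc c v ∧
      (∀ x, x ≠ v - 1 → x ≠ v → dc c x = dc c' x) := by
  obtain ⟨v, hv, huniq⟩ := h
  have hoff : ∀ x, x ≠ v → c.1 x = c'.1 x := fun x hx => by
    by_contra hc; exact hx (huniq x hc)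
  exact ⟨v, rel_structure hv hoff⟩

lemma S_inv {c c' : Col t} (h : R t c c') : S c = S c' := by
  obtain ⟨v, h1, h2, h3, hoff⟩ := rel_facts h
  unfold S
  rw [sum_pair_split _ (v-1) v (sub_one_ne v), sum_pair_split _ (v-1) v (sub_one_ne v)]
  have hrest : ∑ x ∈ Finset.univ \ {v-1, v}, (dc c x).val
      = ∑ x ∈ Finset.univ \ {v-1, v}, (dc c' x).val := by
    apply Finset.sum_congr rfl
    intro x hx
    simp only [Finset.mem_sdiff, Finset.mem_insert, Finset.mem_singleton] at hx
    rw [hoff x (fun h => hx.2 (Or.inl h)) (fun h => hx.2 (Or.inr h))]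
  rw [hrest, h1, h2]
  ring

noncomputable def SQ : Quot (R t) → ℕ := Quot.lift S (fun _ _ h => S_inv h)

lemma conn_S {c d : Col t} (h : Quot.mk (R t) c = Quot.mk (R t) d) : S c = S d :=
  congrArg (SQ) h

lemma card_zmod : Fintype.card (ZMod t) = t := ZMod.card t

lemma S_ge (c : Col t) : t ≤ S c := by
  have h := Finset.card_nsmul_le_sum Finset.univ (fun x => (dc c x).val) 1
    (fun x _ => zvpos _ (dc_ne_zero c x))
  simpa [card_zmod, S] using h

lemma S_le (c : Col t) : S c ≤ 2 * t := by
  have h := Finset.sum_le_card_nsmul Finset.univ (fun x => (dc c x).val) 2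
    (fun x _ => by show (dc c x).val ≤ 2; have := zvlt (dc c x); omega)
  simpa [card_zmod, S, mul_comm] using h

lemma frozen_S {c : Col t} (h : Frozen c) : S c = t * (dc c 0).val := by
  unfold S
  rw [Finset.sum_congr rfl (fun x _ => by rw [h x])]
  simp [card_zmod, mul_comm]

lemma frozen_dvd {c : Col t} (hS3 : 3 ∣ S c) (h : Frozen c) : 3 ∣ t := by
  have h1 := frozen_S h
  have h2 : (dc c 0).val = 1 ∨ (dc c 0).val = 2 := by
    have := zvlt (dc c 0); have := zvpos _ (dc_ne_zero c 0); omega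
  rcases h2 with h2 | h2 <;> rw [h2] at h1 <;> omega

lemma S_eq_t_frozen {c : Col t} (h : S c = t) : Frozen c := by
  have hall : ∀ x : ZMod t, (dc c x).val = 1 := by
    by_contra hc
    push_neg at hc
    obtain ⟨x₀, hx₀⟩ := hc
    have h2 : 2 ≤ (dc c x₀).val := by
      have := zvpos _ (dc_ne_zero c x₀); omega
    have hsplit := (Finset.add_sum_erase Finset.univ (fun x => (dc c x).val)
      (Finset.mem_univ x₀)).symm
    have hrest := Finset.card_nsmul_le_sum (Finset.univ.erase x₀)
      (fun x => (dc c x).val) 1 (fun x _ => zvpos _ (dc_ne_zero c x))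
    have hcard : (Finset.univ.erase x₀).card = t - 1 := by
      rw [Finset.card_erase_of_mem (Finset.mem_univ x₀)]
      simp [card_zmod]
    rw [hcard] at hrest
    have ht1 : 1 ≤ t := Nat.one_le_iff_ne_zero.mpr (NeZero.ne t)
    have : t + 1 ≤ S c := by
      unfold S; rw [hsplit]; simp only [smul_eq_mul, mul_one] at hrest; omega
    omega
  intro x
  rw [z13 _ (hall x), z13 _ (hall 0)]

lemma S_eq_2t_frozen {c : Col t} (h : S c = 2 * t) : Frozen c := by
  have hall : ∀ x : ZMod t, (dc c x).val = 2 := by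
    by_contra hc
    push_neg at hc
    obtain ⟨x₀, hx₀⟩ := hc
    have h2 : (dc c x₀).val ≤ 1 := by have := zvlt (dc c x₀); omega
    have hsplit := (Finset.add_sum_erase Finset.univ (fun x => (dc c x).val)
      (Finset.mem_univ x₀)).symm
    have hrest := Finset.sum_le_card_nsmul (Finset.univ.erase x₀)
      (fun x => (dc c x).val) 2 (fun x _ => by show (dc c x).val ≤ 2; have := zvlt (dc c x); omega)
    have hcard : (Finset.univ.erase x₀).card = t - 1 := by
      rw [Finset.card_erase_of_mem (Finset.mem_univ x₀)]
      simp [card_zmod]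
    rw [hcard] at hrest
    have ht1 : 1 ≤ t := Nat.one_le_iff_ne_zero.mpr (NeZero.ne t)
    have : S c ≤ 2 * t - 1 := by
      unfold S; rw [hsplit]; simp only [smul_eq_mul] at hrest; omega
    omega
  intro x
  rw [z14 _ (hall x), z14 _ (hall 0)]

lemma flex_S_bounds {c : Col t} (h : ¬Frozen c) : t < S c ∧ S c < 2 * t := by
  have h1 := S_ge c
  have h2 := S_le c
  have h3 : S c ≠ t := fun he => h (S_eq_t_frozen he)
  have h4 : S c ≠ 2 * t := fun he => h (S_eq_2t_frozen he)
  omega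

lemma S_bounds_flex {c : Col t} (h1 : t < S c) (h2 : S c < 2 * t) : ¬Frozen c := by
  intro hf
  have := frozen_S hf
  have hv : (dc c 0).val = 1 ∨ (dc c 0).val = 2 := by
    have := zvlt (dc c 0); have := zvpos _ (dc_ne_zero c 0); omega
  rcases hv with hv | hv <;> rw [hv] at this <;> omega

lemma S_dvd (c : Col t) : 3 ∣ S c := by
  have h1 : ((S c : ℕ) : ZMod 3) = 0 := by
    unfold S
    push_cast
    rw [Finset.sum_congr rfl (fun x _ => z3 (dc c x))]
    unfold dc
    rw [Finset.sum_sub_distrib]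
    have h2 := Equiv.sum_comp (Equiv.addRight (1 : ZMod t)) (fun x => toZ3 (c.1 x))
    simp only [Equiv.coe_addRight] at h2
    rw [h2, sub_self]
  exact (ZMod.natCast_eq_zero_iff _ 3).mp h1
lemma val_succ (x : ZMod t) : (x + 1).val = if x.val + 1 < t then x.val + 1 else 0 := by
  rw [ZMod.val_add, ZMod.val_one]
  have hlt := ZMod.val_lt x
  split
  · exact Nat.mod_eq_of_lt (by omega)
  · have : x.val + 1 = t := by omega
    rw [this, Nat.mod_self]

lemma card_filter_le (a : ℕ) (ha : a ≤ t) :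
    (Finset.univ.filter (fun x : ZMod t => a ≤ x.val)).card = t - a := by
  rw [← Nat.card_Ico a t]
  apply Finset.card_bij' (fun (x : ZMod t) _ => x.val)
    (fun (n : ℕ) _ => (n : ZMod t))
  · intro x hx
    simp only [Finset.mem_filter, Finset.mem_univ, true_and] at hx
    simp only [Finset.mem_Ico]
    exact ⟨hx, ZMod.val_lt x⟩
  · intro n hn
    simp only [Finset.mem_Ico] at hn
    simp only [Finset.mem_filter, Finset.mem_univ, true_and]
    rw [ZMod.val_cast_of_lt hn.2]
    exact hn.1
  · intro x _
    exact ZMod.natCast_rightInverse x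
  · intro n hn
    simp only [Finset.mem_Ico] at hn
    exact ZMod.val_cast_of_lt hn.2

lemma W_lt (ht : 3 ≤ t) (c : Col t) : W c < 2 * t * t := by
  have h : W c ≤ t * ((t-1) * 2) := by
    have := Finset.sum_le_card_nsmul Finset.univ (fun x => x.val * (dc c x).val) ((t-1)*2)
      (fun x _ => by
        show x.val * (dc c x).val ≤ (t-1) * 2
        have h1 := ZMod.val_lt x
        have h2 := zvlt (dc c x)
        exact Nat.mul_le_mul (by omega) (by omega))
    simpa [card_zmod, W, mul_comm] using this
  obtain ⟨k, rfl⟩ : ∃ k, t = k + 3 := ⟨t - 3, by omega⟩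
  have hexp : (k+3) * ((k+3-1) * 2) + 2 * (k+3) = 2 * (k+3) * (k+3) := by
    have h3 : k + 3 - 1 = k + 2 := by omega
    rw [h3]; ring
  omega

lemma sort_step (c : Col t) (x : ZMod t) (hx : x.val + 1 < t)
    (hlt : (dc c (x+1)).val < (dc c x).val) :
    ∃ c' : Col t, Quot.mk (R t) c = Quot.mk (R t) c' ∧ c'.1 0 = c.1 0 ∧ W c' = W c + 1 := by
  have hv1 : x + 1 - 1 = x := by ring
  have hdx : dc c x = 2 := by
    apply z14
    have h1 := zvlt (dc c x)
    have h2 := zvpos _ (dc_ne_zero c (x+1))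
    omega
  have hdx1 : dc c (x+1) = 1 := by
    apply z13
    have h1 := zvpos _ (dc_ne_zero c (x+1))
    have h2 : (dc c x).val < 3 := zvlt _
    omega
  have hne : dc c (x + 1 - 1) ≠ dc c (x+1) := by
    rw [hv1, hdx, hdx1]; exact ztwo_ne_one
  obtain ⟨c', hconn, h1, h2, hoff, hcoff, _⟩ := move' c (x+1) hne
  rw [hv1] at h1 h2
  have hxx1 : x ≠ x + 1 := fun h => add_one_ne x h.symm
  have hvalx1 : (x+1).val = x.val + 1 := by rw [val_succ]; simp [hx]
  have hv0 : (x + 1) ≠ 0 := by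
    intro h
    rw [h] at hvalx1
    rw [ZMod.val_zero] at hvalx1
    omega
  refine ⟨c', hconn, hcoff 0 (fun h => hv0 h.symm), ?_⟩
  unfold W
  rw [sum_pair_split _ x (x+1) hxx1, sum_pair_split _ x (x+1) hxx1]
  have hrest : ∑ y ∈ Finset.univ \ {x, x+1}, y.val * (dc c' y).val
      = ∑ y ∈ Finset.univ \ {x, x+1}, y.val * (dc c y).val := by
    apply Finset.sum_congr rfl
    intro y hy
    simp only [Finset.mem_sdiff, Finset.mem_insert, Finset.mem_singleton] at hy
    rw [hoff y (by rw [hv1]; exact fun h => hy.2 (Or.inl h)) (fun h => hy.2 (Or.inr h))]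
  rw [hrest, h1, h2, hdx, hdx1, hvalx1, zval1, zval2]
  ring

lemma sort_reach (ht : 3 ≤ t) : ∀ (k : ℕ) (c : Col t), 2 * t * t ≤ W c + k →
    ∃ d : Col t, Quot.mk (R t) c = Quot.mk (R t) d ∧ d.1 0 = c.1 0 ∧ Srt d := by
  intro k
  induction k with
  | zero => intro c hc; exact absurd hc (by have := W_lt ht c; omega)
  | succ k ih =>
    intro c hc
    by_cases hs : Srt c
    · exact ⟨c, rfl, rfl, hs⟩
    · unfold Srt at hs
      push_neg at hs
      obtain ⟨x, hx, hlt⟩ := hs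
      obtain ⟨c', hconn, h0, hW⟩ := sort_step c x hx hlt
      obtain ⟨d, hconn', h0', hsrt⟩ := ih c' (by omega)
      exact ⟨d, hconn.trans hconn', h0'.trans h0, hsrt⟩
lemma sorted_mono {c : Col t} (hc : Srt c) :
    ∀ b a : ℕ, a ≤ b → b < t → (dc c (a : ZMod t)).val ≤ (dc c (b : ZMod t)).val := by
  intro b
  induction b with
  | zero => intro a ha _; interval_cases a; exact le_refl _
  | succ b ih =>
    intro a ha hb
    rcases Nat.eq_or_lt_of_le ha with h | h
    · rw [h]
    · have hab : a ≤ b := by omega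
      have hbt : b < t := by omega
      refine (ih a hab hbt).trans ?_
      have hcast : ((b : ZMod t) : ZMod t) + 1 = ((b + 1 : ℕ) : ZMod t) := by push_cast; ring
      have hval : ((b : ZMod t)).val = b := ZMod.val_cast_of_lt hbt
      have := hc (b : ZMod t) (by rw [hval]; omega)
      rwa [hcast] at this

lemma sorted_two_up {c : Col t} (hc : Srt c) {x y : ZMod t} (h : x.val ≤ y.val)
    (h2 : dc c x = 2) : dc c y = 2 := by
  apply z6 _ (dc_ne_zero c y)
  have hx : ((x.val : ℕ) : ZMod t) = x := ZMod.natCast_rightInverse x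
  have hy : ((y.val : ℕ) : ZMod t) = y := ZMod.natCast_rightInverse y
  have := sorted_mono hc y.val x.val h (ZMod.val_lt y)
  rw [hx, hy, h2, zval2] at this
  omega

lemma S_card (c : Col t) :
    S c = t + (Finset.univ.filter (fun x : ZMod t => dc c x = 2)).card := by
  classical
  unfold S
  rw [← Finset.sum_filter_add_sum_filter_not Finset.univ (fun x => dc c x = 2)
    (fun x => (dc c x).val)]
  have h1 : ∑ x ∈ Finset.univ.filter (fun x : ZMod t => dc c x = 2), (dc c x).val
      = 2 * (Finset.univ.filter (fun x : ZMod t => dc c x = 2)).card := by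
    rw [Finset.sum_congr rfl (fun x hx => by
      rw [(Finset.mem_filter.mp hx).2, zval2])]
    simp [mul_comm]
  have h2 : ∑ x ∈ Finset.univ.filter (fun x : ZMod t => ¬dc c x = 2), (dc c x).val
      = (Finset.univ.filter (fun x : ZMod t => ¬dc c x = 2)).card := by
    rw [Finset.sum_congr rfl (fun x hx => by
      rw [z12 _ (dc_ne_zero c x) (Finset.mem_filter.mp hx).2, zval1])]
    simp
  rw [h1, h2]
  have h3 := Finset.card_filter_add_card_filter_not (s := (Finset.univ : Finset (ZMod t)))
    (p := fun x => dc c x = 2)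
  rw [Finset.card_univ, card_zmod] at h3
  omega

lemma sorted_threshold {c : Col t} (hc : Srt c) (x : ZMod t) :
    dc c x = 2 ↔ 2 * t - S c ≤ x.val := by
  classical
  have hScard := S_card c
  have hSle := S_le c
  have hSge := S_ge c
  have hfwd : ∀ y : ZMod t, dc c y = 2 → 2 * t - S c ≤ y.val := by
    intro y hy
    have hsub : Finset.univ.filter (fun z : ZMod t => y.val ≤ z.val) ⊆
        Finset.univ.filter (fun x : ZMod t => dc c x = 2) := by
      intro z hz
      simp only [Finset.mem_filter, Finset.mem_univ, true_and] at hz ⊢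
      exact sorted_two_up hc hz hy
    have hcard := Finset.card_le_card hsub
    rw [card_filter_le y.val (le_of_lt (ZMod.val_lt y))] at hcard
    have := ZMod.val_lt y
    omega
  constructor
  · exact hfwd x
  · intro hx
    have hsub : Finset.univ.filter (fun x : ZMod t => dc c x = 2) ⊆
        Finset.univ.filter (fun z : ZMod t => 2 * t - S c ≤ z.val) := fun z hz => by
      simp only [Finset.mem_filter, Finset.mem_univ, true_and] at hz ⊢
      exact hfwd z hz
    have hAeq := Finset.eq_of_subset_of_card_le hsub (by
      rw [card_filter_le _ (by omega : 2 * t - S c ≤ t)]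
      omega)
    have hmem : x ∈ Finset.univ.filter (fun x : ZMod t => dc c x = 2) := by
      rw [hAeq]
      simp only [Finset.mem_filter, Finset.mem_univ, true_and]
      exact hx
    simpa using hmem

lemma determined {c c' : Col t} (h0 : toZ3 (c.1 0) = toZ3 (c'.1 0))
    (hdd : ∀ x, dc c x = dc c' x) : c = c' := by
  have key : ∀ n : ℕ, toZ3 (c.1 (n : ZMod t)) = toZ3 (c'.1 (n : ZMod t)) := by
    intro n
    induction n with
    | zero => simpa using h0
    | succ n ih =>
      have hcast : ((n + 1 : ℕ) : ZMod t) = ((n : ℕ) : ZMod t) + 1 := by push_cast; ring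
      have h1 := hdd ((n : ℕ) : ZMod t)
      unfold dc at h1
      rw [hcast]
      linear_combination h1 + ih
  apply Subtype.ext
  funext x
  have hx : ((x.val : ℕ) : ZMod t) = x := ZMod.natCast_rightInverse x
  have := key x.val
  rw [hx] at this
  exact this

lemma sorted_unique {c c' : Col t} (hS : S c = S c') (h0 : toZ3 (c.1 0) = toZ3 (c'.1 0))
    (hc : Srt c) (hc' : Srt c') : c = c' := by
  apply determined h0
  intro x
  apply z10 _ _ (dc_ne_zero c x) (dc_ne_zero c' x)
  rw [sorted_threshold hc x, sorted_threshold hc' x, hS]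

lemma val_neg_one_t : (0 - 1 : ZMod t).val = t - 1 := by
  have h1 : 1 ≤ t := Nat.one_le_iff_ne_zero.mpr (NeZero.ne t)
  have h2 : ((t - 1 : ℕ) : ZMod t) = 0 - 1 := by
    rw [Nat.cast_sub h1, ZMod.natCast_self]
    push_cast
    ring
  rw [← h2, ZMod.val_cast_of_lt (by omega)]

lemma rotate (ht : 3 ≤ t) (c : Col t) (h1 : t < S c) (h2 : S c < 2 * t) (hsort : Srt c) :
    ∃ d : Col t, Quot.mk (R t) c = Quot.mk (R t) d ∧ Srt d ∧
      toZ3 (d.1 0) = toZ3 (c.1 0) - 1 := by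
  have hS3 := S_dvd c
  have hd0 : dc c 0 = 1 := by
    apply z12 _ (dc_ne_zero c 0)
    intro hc2
    have := (sorted_threshold hsort 0).mp hc2
    rw [ZMod.val_zero] at this
    omega
  have hdm1 : dc c (0 - 1) = 2 := by
    rw [sorted_threshold hsort, val_neg_one_t]
    omega
  have hne : dc c (0 - 1) ≠ dc c 0 := by rw [hd0, hdm1]; exact ztwo_ne_one
  obtain ⟨c₁, hconn, _, _, _, _, hc0⟩ := move' c 0 hne
  have hc1val : toZ3 (c₁.1 0) = toZ3 (c.1 0) - 1 := by
    have hc1 : toZ3 (c.1 (0 + 1)) = toZ3 (c.1 0) + 1 := by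
      have := hd0
      unfold dc at this
      linear_combination this
    rw [hc0, hc1]
    exact z8 _
  obtain ⟨d, hconn', h0', hsrt⟩ := sort_reach ht (2 * t * t) c₁ (by omega)
  refine ⟨d, hconn.trans hconn', hsrt, ?_⟩
  rw [← hc1val]
  exact congrArg toZ3 h0'

lemma rotate_iter (ht : 3 ≤ t) : ∀ (k : ℕ) (c : Col t), t < S c → S c < 2 * t → Srt c →
    ∃ d : Col t, Quot.mk (R t) c = Quot.mk (R t) d ∧ Srt d ∧
      toZ3 (d.1 0) = toZ3 (c.1 0) - (k : ZMod 3) := by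
  intro k
  induction k with
  | zero => intro c _ _ hs; exact ⟨c, rfl, hs, by simp⟩
  | succ k ih =>
    intro c h1 h2 hs
    obtain ⟨d₁, hconn, hs₁, h0₁⟩ := rotate ht c h1 h2 hs
    have hSd : S d₁ = S c := (conn_S hconn).symm
    obtain ⟨d, hconn', hs', h0'⟩ := ih d₁ (by omega) (by omega) hs₁
    refine ⟨d, hconn.trans hconn', hs', ?_⟩
    rw [h0', h0₁]
    push_cast
    ring

lemma flex_conn (ht : 3 ≤ t) (c : Col t) (h1 : t < S c) (h2 : S c < 2 * t) :
    ∃ d : Col t, Quot.mk (R t) c = Quot.mk (R t) d ∧ Srt d ∧ toZ3 (d.1 0) = 0 ∧ S d = S c := by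
  obtain ⟨e, hconn, h0, hsrt⟩ := sort_reach ht (2 * t * t) c (by omega)
  have hSe : S e = S c := (conn_S hconn).symm
  obtain ⟨d, hconn', hs', h0'⟩ := rotate_iter ht ((toZ3 (e.1 0)).val) e (by omega) (by omega) hsrt
  refine ⟨d, hconn.trans hconn', hs', ?_, (conn_S hconn').symm.trans hSe⟩
  rw [h0', z3]
  ring
lemma rep_flex (ht : 3 ≤ t) {s : ℕ} (h1 : t < s) (h2 : s < 2*t) (h3 : 3 ∣ s) :
    ∃ c : Col t, S c = s ∧ Srt c ∧ toZ3 (c.1 0) = 0 ∧ ¬Frozen c := by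
  classical
  set p := 2*t - s with hp
  have hp1 : 1 ≤ p := by omega
  have hpt : p ≤ t - 1 := by omega
  set g : ℕ → ℕ := fun j => j + (j - p) with hg
  set f : ZMod t → Fin 3 := fun x => toFin ((g x.val : ℕ) : ZMod 3) with hf
  have hto : ∀ a : ZMod 3, toZ3 (toFin a) = a := fun a => rfl
  have hdiff : ∀ x : ZMod t, toZ3 (f (x+1)) - toZ3 (f x) = if p ≤ x.val then 2 else 1 := by
    intro x
    have hvlt := ZMod.val_lt x
    by_cases hx : x.val + 1 < t
    · have hv1 : (x+1).val = x.val + 1 := by rw [val_succ]; simp [hx]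
      have hstep : g (x.val + 1) = g x.val + (if p ≤ x.val then 2 else 1) := by
        simp only [hg]; split <;> omega
      rw [hf]
      simp only
      rw [hto, hto, hv1, hstep]
      split <;> · push_cast; ring
    · have hxv : x.val = t - 1 := by omega
      have hx1 : x + 1 = 0 := by
        calc x + 1 = ((x.val : ℕ) : ZMod t) + 1 := by rw [ZMod.natCast_rightInverse x]
        _ = ((x.val + 1 : ℕ) : ZMod t) := by push_cast; ring
        _ = ((t : ℕ) : ZMod t) := by rw [hxv]; congr 1; omega
        _ = 0 := ZMod.natCast_self t
      have hg0 : g 0 = 0 := by simp [hg]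
      have hgt : g (t-1) = s - 2 := by simp only [hg]; omega
      rw [hf, hx1]
      simp only
      rw [hto, hto, ZMod.val_zero, hg0, hxv, hgt, if_pos (by omega : p ≤ t - 1)]
      have hs2 : ((s - 2 : ℕ) : ZMod 3) = 1 := by
        have hcs : ((s : ℕ) : ZMod 3) = 0 := (ZMod.natCast_eq_zero_iff s 3).mpr h3
        rw [Nat.cast_sub (by omega : 2 ≤ s), hcs]
        decide
      rw [hs2]
      decide
  have hproper : ∀ x : ZMod t, f x ≠ f (x+1) := by
    intro x h
    have h2' := hdiff x
    rw [← h, sub_self] at h2'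
    split at h2' <;> exact absurd h2' (by decide)
  have hdc : ∀ x : ZMod t, dc ⟨f, hproper⟩ x = if p ≤ x.val then 2 else 1 := fun x => hdiff x
  refine ⟨⟨f, hproper⟩, ?_, ?_, ?_, ?_⟩
  · refine (S_card _).trans ?_
    have hfe : Finset.univ.filter (fun x : ZMod t => dc ⟨f, hproper⟩ x = 2)
        = Finset.univ.filter (fun x : ZMod t => p ≤ x.val) := by
      apply Finset.filter_congr
      intro x _
      rw [hdc x]
      constructor
      · intro hh
        by_contra hcon
        rw [if_neg hcon] at hh
        exact absurd hh (by decide)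
      · intro hh; rw [if_pos hh]
    rw [hfe, card_filter_le p (by omega)]
    omega
  · intro x hx
    have hv1 : (x+1).val = x.val + 1 := by rw [val_succ]; simp [hx]
    rw [hdc x, hdc (x+1), hv1]
    by_cases hpx : p ≤ x.val
    · rw [if_pos hpx, if_pos (by omega : p ≤ x.val + 1), zval2]
    · rw [if_neg hpx, zval1]
      split
      · rw [zval2]; omega
      · rw [zval1]
  · show toZ3 (f 0) = 0
    rw [hf]
    simp only
    rw [hto, ZMod.val_zero]
    have : g 0 = 0 := by simp [hg]
    rw [this]
    simp
  · intro hfr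
    have hd0 : dc ⟨f, hproper⟩ 0 = 1 := by
      rw [hdc 0, ZMod.val_zero, if_neg (by omega : ¬ p ≤ 0)]
    have hdp : dc ⟨f, hproper⟩ ((p : ℕ) : ZMod t) = 2 := by
      rw [hdc, ZMod.val_cast_of_lt (by omega : p < t), if_pos (le_refl p)]
    rw [hfr ((p : ℕ) : ZMod t), hd0] at hdp
    exact absurd hdp (by decide)

lemma cast_mod_three (h3 : 3 ∣ t) (a : ℕ) : ((a % t : ℕ) : ZMod 3) = (a : ZMod 3) := by
  conv_rhs => rw [← Nat.div_add_mod a t]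
  push_cast
  rw [(ZMod.natCast_eq_zero_iff t 3).mpr h3]
  ring

lemma rep_frozen (ht : 3 ≤ t) (h3 : 3 ∣ t) (k a : ℕ) (hk : k = 1 ∨ k = 2) (ha : a < 3) :
    ∃ c : Col t, Frozen c ∧ (dc c 0).val = k ∧ (toZ3 (c.1 0)).val = a := by
  classical
  set f : ZMod t → Fin 3 := fun x => toFin ((a + k * x.val : ℕ) : ZMod 3) with hf
  have hto : ∀ a : ZMod 3, toZ3 (toFin a) = a := fun a => rfl
  have hknz : ((k : ℕ) : ZMod 3) ≠ 0 := by rcases hk with rfl | rfl <;> decide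
  have hdiff : ∀ x : ZMod t, toZ3 (f (x+1)) - toZ3 (f x) = ((k : ℕ) : ZMod 3) := by
    intro x
    have hv : (((x+1).val : ℕ) : ZMod 3) = ((x.val : ℕ) : ZMod 3) + 1 := by
      rw [ZMod.val_add, ZMod.val_one, cast_mod_three h3]
      push_cast
      ring
    rw [hf]
    simp only
    rw [hto, hto]
    push_cast
    rw [hv]
    ring
  have hproper : ∀ x : ZMod t, f x ≠ f (x+1) := by
    intro x h
    have h2' := hdiff x
    rw [← h, sub_self] at h2'
    exact hknz h2'.symm
  have hdc : ∀ x : ZMod t, dc ⟨f, hproper⟩ x = ((k : ℕ) : ZMod 3) := fun x => hdiff x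
  refine ⟨⟨f, hproper⟩, fun x => by rw [hdc x, hdc 0], ?_, ?_⟩
  · rw [hdc 0, ZMod.val_cast_of_lt (by omega : k < 3)]
  · show (toZ3 (f 0)).val = a
    rw [hf]
    simp only
    rw [hto, ZMod.val_zero]
    simp only [Nat.mul_zero, Nat.add_zero]
    exact ZMod.val_cast_of_lt ha

open Classical in
noncomputable def Phi (c : Col t) : ℕ :=
  if Frozen c then 2*t + 1 + 3*((dc c 0).val - 1) + (toZ3 (c.1 0)).val else S c

variable (t) in
def TT : Finset ℕ := (Finset.range (2*t+7)).filter
  (fun n => (t < n ∧ n < 2*t ∧ 3 ∣ n) ∨ (3 ∣ t ∧ 2*t+1 ≤ n ∧ n ≤ 2*t+6))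

lemma Phi_mem (ht : 3 ≤ t) (c : Col t) : Phi c ∈ TT t := by
  unfold Phi TT
  simp only [Finset.mem_filter, Finset.mem_range]
  by_cases h : Frozen c
  · rw [if_pos h]
    have h3t := frozen_dvd (S_dvd c) h
    have hv1 := zvlt (dc c 0)
    have hv2 := zvpos _ (dc_ne_zero c 0)
    have hv3 := zvlt (toZ3 (c.1 0))
    exact ⟨by omega, Or.inr ⟨h3t, by omega, by omega⟩⟩
  · rw [if_neg h]
    have hb := flex_S_bounds h
    have hd := S_dvd c
    exact ⟨by omega, Or.inl ⟨hb.1, hb.2, hd⟩⟩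

lemma Phi_inv {c c' : Col t} (h : R t c c') : Phi c = Phi c' := by
  obtain ⟨v, h1, h2, h3, hoff⟩ := rel_facts h
  have hnf : ¬Frozen c := fun hf => h3 (by rw [hf (v-1), hf v])
  have hnf' : ¬Frozen c' := by
    intro hf
    have hne : dc c' (v-1) ≠ dc c' v := by
      rw [h1, h2]; exact fun he => h3 he.symm
    exact hne (by rw [hf (v-1), hf v])
  unfold Phi
  rw [if_neg hnf, if_neg hnf']
  exact S_inv h

lemma Phi_inj (ht : 3 ≤ t) {c c' : Col t} (h : Phi c = Phi c') :
    Quot.mk (R t) c = Quot.mk (R t) c' := by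
  by_cases hf : Frozen c <;> by_cases hf' : Frozen c'
  · unfold Phi at h
    rw [if_pos hf, if_pos hf'] at h
    have u1 : (dc c 0).val = 1 ∨ (dc c 0).val = 2 := by
      have := zvlt (dc c 0); have := zvpos _ (dc_ne_zero c 0); omega
    have u2 : (dc c' 0).val = 1 ∨ (dc c' 0).val = 2 := by
      have := zvlt (dc c' 0); have := zvpos _ (dc_ne_zero c' 0); omega
    have a1 := zvlt (toZ3 (c.1 0))
    have a2 := zvlt (toZ3 (c'.1 0))
    have hka : (dc c 0).val = (dc c' 0).val ∧ (toZ3 (c.1 0)).val = (toZ3 (c'.1 0)).val := by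
      rcases u1 with u1 | u1 <;> rcases u2 with u2 | u2 <;> rw [u1, u2] at h ⊢ <;> omega
    have hceq : c = c' := by
      apply determined (z4 _ _ hka.2)
      intro x
      rw [hf x, hf' x, z4 _ _ hka.1]
    rw [hceq]
  · exfalso
    unfold Phi at h
    rw [if_pos hf, if_neg hf'] at h
    have hb := flex_S_bounds hf'
    omega
  · exfalso
    unfold Phi at h
    rw [if_neg hf, if_pos hf'] at h
    have hb := flex_S_bounds hf
    omega
  · have hS : S c = S c' := by
      unfold Phi at h
      rwa [if_neg hf, if_neg hf'] at h
    have hb := flex_S_bounds hf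
    have hb' := flex_S_bounds hf'
    obtain ⟨d, hc1, hs1, h01, hS1⟩ := flex_conn ht c hb.1 hb.2
    obtain ⟨d', hc1', hs1', h01', hS1'⟩ := flex_conn ht c' hb'.1 hb'.2
    have hdd : d = d' := by
      apply sorted_unique (by omega) (h01.trans h01'.symm) hs1 hs1'
    rw [hc1, hc1', hdd]

lemma Phi_surj (ht : 3 ≤ t) (n : ℕ) (hn : n ∈ TT t) : ∃ c : Col t, Phi c = n := by
  unfold TT at hn
  simp only [Finset.mem_filter, Finset.mem_range] at hn
  rcases hn.2 with ⟨h1, h2, h3⟩ | ⟨h3t, h1, h2⟩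
  · obtain ⟨c, hS, _, _, hnf⟩ := rep_flex ht h1 h2 h3
    exact ⟨c, by unfold Phi; rw [if_neg hnf]; exact hS⟩
  · rcases le_or_gt n (2*t+3) with hc3 | hc3
    · obtain ⟨c, hfr, hdc, h0⟩ := rep_frozen ht h3t 1 (n - (2*t+1)) (Or.inl rfl) (by omega)
      refine ⟨c, ?_⟩
      unfold Phi
      rw [if_pos hfr, hdc, h0]
      omega
    · obtain ⟨c, hfr, hdc, h0⟩ := rep_frozen ht h3t 2 (n - (2*t+4)) (Or.inr rfl) (by omega)
      refine ⟨c, ?_⟩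
      unfold Phi
      rw [if_pos hfr, hdc, h0]
      omega

lemma main_card (ht : 3 ≤ t) : Nat.card (Quot (R t)) = (TT t).card := by
  classical
  rw [← Nat.card_eq_finsetCard (TT t)]
  apply Nat.card_eq_of_bijective
    (Quot.lift (fun c => (⟨Phi c, Phi_mem ht c⟩ : {n // n ∈ TT t}))
      (fun a b h => Subtype.ext (Phi_inv h)))
  constructor
  · intro q q'
    induction q using Quot.ind with | _ c =>
    induction q' using Quot.ind with | _ c' =>
    intro h
    exact Phi_inj ht (Subtype.ext_iff.mp h)
  · rintro ⟨n, hn⟩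
    obtain ⟨c, hc⟩ := Phi_surj ht n hn
    exact ⟨Quot.mk _ c, Subtype.ext hc⟩

lemma TT_card (ht : 3 ≤ t) : (TT t).card = if 3 ∣ t then t/3 + 5 else (t+1)/3 := by
  classical
  have hsplit : TT t = ((Finset.range (2*t+7)).filter (fun n => t < n ∧ n < 2*t ∧ 3 ∣ n))
      ∪ ((Finset.range (2*t+7)).filter (fun n => 3 ∣ t ∧ 2*t+1 ≤ n ∧ n ≤ 2*t+6)) := by
    unfold TT
    rw [← Finset.filter_or]
  have hdisj : Disjoint ((Finset.range (2*t+7)).filter (fun n => t < n ∧ n < 2*t ∧ 3 ∣ n))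
      ((Finset.range (2*t+7)).filter (fun n => 3 ∣ t ∧ 2*t+1 ≤ n ∧ n ≤ 2*t+6)) := by
    rw [Finset.disjoint_left]
    intro n hn1 hn2
    simp only [Finset.mem_filter] at hn1 hn2
    omega
  rw [hsplit, Finset.card_union_of_disjoint hdisj]
  have hc1 : ((Finset.range (2*t+7)).filter (fun n => t < n ∧ n < 2*t ∧ 3 ∣ n))
      = (Finset.Ioc t (2*t-1)).filter (fun n => 3 ∣ n) := by
    ext n
    simp only [Finset.mem_filter, Finset.mem_range, Finset.mem_Ioc]
    omega
  have hu : Finset.Ioc 0 t ∪ Finset.Ioc t (2*t-1) = Finset.Ioc 0 (2*t-1) :=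
    Finset.Ioc_union_Ioc_eq_Ioc (by omega) (by omega)
  have hdisj2 : Disjoint ((Finset.Ioc 0 t).filter (fun n => 3 ∣ n))
      ((Finset.Ioc t (2*t-1)).filter (fun n => 3 ∣ n)) := by
    rw [Finset.disjoint_left]
    intro n hn1 hn2
    simp only [Finset.mem_filter, Finset.mem_Ioc] at hn1 hn2
    omega
  have hkey : ((Finset.Ioc 0 t).filter (fun n => 3 ∣ n)).card
      + ((Finset.Ioc t (2*t-1)).filter (fun n => 3 ∣ n)).card
      = ((Finset.Ioc 0 (2*t-1)).filter (fun n => 3 ∣ n)).card := by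
    rw [← Finset.card_union_of_disjoint hdisj2, ← Finset.filter_union, hu]
  have e1 : ((Finset.Ioc 0 t).filter (fun n => 3 ∣ n)).card = t / 3 :=
    Nat.Ioc_filter_dvd_card_eq_div t 3
  have e2 : ((Finset.Ioc 0 (2*t-1)).filter (fun n => 3 ∣ n)).card = (2*t-1) / 3 :=
    Nat.Ioc_filter_dvd_card_eq_div (2*t-1) 3
  rw [e1, e2] at hkey
  rw [hc1]
  by_cases h3 : 3 ∣ t
  · have hc2 : ((Finset.range (2*t+7)).filter (fun n => 3 ∣ t ∧ 2*t+1 ≤ n ∧ n ≤ 2*t+6))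
        = Finset.Icc (2*t+1) (2*t+6) := by
      ext n
      simp only [Finset.mem_filter, Finset.mem_range, Finset.mem_Icc, h3, true_and]
      omega
    rw [hc2, Nat.card_Icc, if_pos h3]
    omega
  · have hc2 : ((Finset.range (2*t+7)).filter (fun n => 3 ∣ t ∧ 2*t+1 ≤ n ∧ n ≤ 2*t+6))
        = ∅ := by
      ext n
      simp only [Finset.mem_filter, Finset.mem_range, Finset.notMem_empty, iff_false]
      rintro ⟨-, hd, -⟩
      exact h3 hd
    rw [hc2, Finset.card_empty, if_neg h3]
    have hm : t % 3 = 1 ∨ t % 3 = 2 := by omega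
    rcases hm with hm | hm <;> omega

end

/-- the number of connected components of `Hom(C_t, K_3)`, i.e. the number
of equivalence classes of proper 3-colorings of the cycle `C_t` under the equivalence
generated by single-vertex recolorings, equals `⌊(t+1)/3⌋` if `3 ∤ t`, and `t/3 + 5`
if `3 ∣ t`. -/
theorem card_components_hom_cycle_K3 (t : ℕ) (ht : 3 ≤ t) :
    Nat.card (Quot (fun c c' : {c : ZMod t → Fin 3 // ∀ x : ZMod t, c x ≠ c (x + 1)} =>
        ∃! v : ZMod t, c.1 v ≠ c'.1 v))
      = if 3 ∣ t then t / 3 + 5 else (t + 1) / 3 := by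
  haveI : NeZero t := ⟨by omega⟩
  haveI : Fact (1 < t) := ⟨by omega⟩
  exact (main_card ht).trans (TT_card ht)
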